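/- Consider the randomized information propagation process with transmission probability p on the d-dimensional hypercube graph Q_d, starting at any vertex v*. For every integer k with 0 ≤ k ≤ d, the expected number of rounds until at least 2^k vertices are informed is at most 24(k+1)/p. -/

import Mathlib

open MeasureTheory ProbabilityTheory ENNReal

/-- The informed vertices of the randomized information propagation process on the directed
graph with edge relation `E`, driven by the coins `coin` and started at `v0`: initially exactly
`v0` is informed, informed vertices stay informed, and in each round every informed vertex `u`
informs each out-neighbour `v` whenever the corresponding coin `coin t u v` comes up `true`. -/
def informed {V Ω : Type} (E : V → V → Prop) (coin : ℕ → V → V → Ω → Bool) (v0 : V) :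
    ℕ → V → Ω → Prop
  | 0, v, _ => v = v0
  | t + 1, v, ω => informed E coin v0 t v ω ∨
      ∃ u, E u v ∧ informed E coin v0 t u ω ∧ coin t u v ω = true

/-- The coins driving the propagation process with transmission probability `p`: measurable,
mutually independent, and each one `true` with probability exactly `p`. -/
def PropagationCoins {V Ω : Type} [MeasurableSpace Ω] (coin : ℕ → V → V → Ω → Bool)
    (P : MeasureTheory.Measure Ω) (p : ℝ) : Prop :=
  (∀ t u v, Measurable (coin t u v)) ∧
  ProbabilityTheory.iIndepFun
    (fun j : ℕ × V × V => coin j.1 j.2.1 j.2.2) P ∧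
  ∀ t u v, P {ω | coin t u v ω = true} = ENNReal.ofReal p

section aux
variable {V Ω : Type} {E : V → V → Prop} {coin : ℕ → V → V → Ω → Bool} {v0 : V}

lemma informed_self (t : ℕ) (ω : Ω) : informed E coin v0 t v0 ω := by
  induction t with
  | zero => simp [informed]
  | succ t ih => exact Or.inl ih

lemma informed_mono {s t : ℕ} (hst : s ≤ t) {v : V} {ω : Ω}
    (h : informed E coin v0 s v ω) : informed E coin v0 t v ω := by
  induction t with
  | zero => exact (Nat.le_zero.mp hst) ▸ h
  | succ t ih =>
    rcases Nat.lt_or_ge s (t+1) with hlt | hge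
    · exact Or.inl (ih (by omega))
    · have : s = t + 1 := by omega
      exact this ▸ h

lemma informed_congr {t : ℕ} {v : V} {ω ω' : Ω}
    (hc : ∀ s u w, s < t → coin s u w ω = coin s u w ω')
    (h : informed E coin v0 t v ω) : informed E coin v0 t v ω' := by
  induction t generalizing v with
  | zero => exact h
  | succ t ih =>
    rcases h with h | ⟨u, hE, hu, hcoin⟩
    · exact Or.inl (ih (fun s u w hs => hc s u w (by omega)) h)
    · exact Or.inr ⟨u, hE, ih (fun s u w hs => hc s u w (by omega)) hu,
        by rw [← hc t u v (by omega)]; exact hcoin⟩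

lemma measurableSet_informed [MeasurableSpace Ω] [Countable V]
    (hm : ∀ t u v, Measurable (coin t u v)) (t : ℕ) (v : V) :
    MeasurableSet {ω | informed E coin v0 t v ω} := by
  induction t generalizing v with
  | zero =>
    by_cases h : v = v0
    · simp [informed, h]
    · simp [informed, h]
  | succ t ih =>
    have : {ω | informed E coin v0 (t+1) v ω} =
        {ω | informed E coin v0 t v ω} ∪
        ⋃ u, ({ω | E u v ∧ informed E coin v0 t u ω} ∩ {ω | coin t u v ω = true}) := by
      ext ω
      simp only [Set.mem_setOf_eq, Set.mem_union, Set.mem_iUnion, Set.mem_inter_iff]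
      constructor
      · rintro (h | ⟨u, hE, hu, hc⟩)
        · exact Or.inl h
        · exact Or.inr ⟨u, ⟨hE, hu⟩, hc⟩
      · rintro (h | ⟨u, ⟨hE, hu⟩, hc⟩)
        · exact Or.inl h
        · exact Or.inr ⟨u, hE, hu, hc⟩
    rw [this]
    refine (ih v).union (MeasurableSet.iUnion fun u => ?_)
    refine MeasurableSet.inter ?_ ((hm t u v) (measurableSet_singleton true))
    by_cases hE : E u v
    · simp only [hE, true_and]; exact ih u
    · simp [hE]

/-- The key independence fact: an event depending only on coins before time `t` is
independent of a single coin at time `t`. -/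
lemma coin_indep [MeasurableSpace Ω] [Fintype V] {P : Measure Ω} {p : ℝ}
    (hc : PropagationCoins coin P p) (t : ℕ) (a b : V) (D : Set Ω)
    (hD : ∀ ω ω', (∀ s u w, s < t → coin s u w ω = coin s u w ω') → ω ∈ D → ω' ∈ D) :
    P (D ∩ {ω | coin t a b ω = true}) = P D * ENNReal.ofReal p := by
  classical
  set S : Finset (ℕ × V × V) := Finset.range t ×ˢ Finset.univ with hS
  set T : Finset (ℕ × V × V) := {(t, a, b)} with hT
  have hST : Disjoint S T := by
    rw [Finset.disjoint_left]
    rintro ⟨s, u, w⟩ hinS hinT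
    simp only [hS, Finset.mem_product, Finset.mem_range] at hinS
    simp only [hT, Finset.mem_singleton, Prod.mk.injEq] at hinT
    omega
  have hIF := hc.2.1.indepFun_finset S T hST (fun i => hc.1 i.1 i.2.1 i.2.2)
  set gS : Ω → (S → Bool) := fun ω i => coin (i : ℕ × V × V).1 (i : ℕ × V × V).2.1
      (i : ℕ × V × V).2.2 ω with hgS
  set gT : Ω → (T → Bool) := fun ω i => coin (i : ℕ × V × V).1 (i : ℕ × V × V).2.1
      (i : ℕ × V × V).2.2 ω with hgT
  have hmemT : (t, a, b) ∈ T := Finset.mem_singleton_self _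
  set B' : Set (T → Bool) := {f | f ⟨(t, a, b), hmemT⟩ = true} with hB'
  have hDeq : D = gS ⁻¹' (gS '' D) := by
    apply Set.Subset.antisymm (Set.subset_preimage_image _ _)
    rintro ω ⟨ω', hω', heq⟩
    refine hD ω' ω (fun s u w hs => ?_) hω'
    have hmem : (s, u, w) ∈ S := by
      simp only [hS, Finset.mem_product, Finset.mem_range]
      exact ⟨hs, Finset.mem_univ _⟩
    exact congrFun heq ⟨(s, u, w), hmem⟩
  have hCeq : {ω | coin t a b ω = true} = gT ⁻¹' B' := rfl
  have hA'm : MeasurableSet (gS '' D) := (Set.toFinite _).measurableSet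
  have hB'm : MeasurableSet B' := (Set.toFinite _).measurableSet
  have := (indepFun_iff_measure_inter_preimage_eq_mul.mp hIF) (gS '' D) B' hA'm hB'm
  rw [hCeq, hDeq]
  rw [this]
  congr 1
  rw [← hCeq]
  exact hc.2.2 t a b

end aux

/-- Lower bound recursion for progress along a path: `gfun pe t j` is (a lower bound for)
the probability that `Bin(t, p) ≥ j`. -/
noncomputable def gfun (pe : ℝ≥0∞) : ℕ → ℕ → ℝ≥0∞
  | _, 0 => 1
  | 0, _ + 1 => 0
  | t + 1, j + 1 => (1 - pe) * gfun pe t (j + 1) + pe * gfun pe t j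

noncomputable def hfun (pe : ℝ≥0∞) : ℕ → ℕ → ℝ≥0∞
  | _, 0 => 0
  | 0, _ + 1 => 1
  | t + 1, j + 1 => (1 - pe) * hfun pe t (j + 1) + pe * hfun pe t j

variable {pe : ℝ≥0∞}

lemma gfun_add_hfun (hpe : pe ≤ 1) : ∀ t j, gfun pe t j + hfun pe t j = 1 := by
  intro t
  induction t with
  | zero =>
    intro j
    cases j with
    | zero => simp [gfun, hfun]
    | succ j => simp [gfun, hfun]
  | succ t ih =>
    intro j
    cases j with
    | zero => simp [gfun, hfun]
    | succ j =>
      show (1 - pe) * gfun pe t (j + 1) + pe * gfun pe t j +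
        ((1 - pe) * hfun pe t (j + 1) + pe * hfun pe t j) = 1
      have h1 : (1 - pe) * gfun pe t (j + 1) + pe * gfun pe t j +
          ((1 - pe) * hfun pe t (j + 1) + pe * hfun pe t j)
          = (1 - pe) * (gfun pe t (j + 1) + hfun pe t (j + 1)) +
            pe * (gfun pe t j + hfun pe t j) := by ring
      rw [h1, ih (j + 1), ih j, mul_one, mul_one, tsub_add_cancel_of_le hpe]

lemma gfun_le_one (hpe : pe ≤ 1) : ∀ t j, gfun pe t j ≤ 1 := by
  intro t j
  have := gfun_add_hfun hpe t j
  calc gfun pe t j ≤ gfun pe t j + hfun pe t j := le_self_add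
  _ = 1 := this

lemma gfun_anti (hpe : pe ≤ 1) : ∀ t j, gfun pe t (j + 1) ≤ gfun pe t j := by
  intro t
  induction t with
  | zero => intro j; simp [gfun]
  | succ t ih =>
    intro j
    cases j with
    | zero =>
      show (1 - pe) * gfun pe t 1 + pe * gfun pe t 0 ≤ 1
      calc (1 - pe) * gfun pe t 1 + pe * gfun pe t 0
          ≤ (1 - pe) * 1 + pe * 1 := by
            gcongr <;> exact gfun_le_one hpe _ _
        _ = 1 := by rw [mul_one, mul_one, tsub_add_cancel_of_le hpe]
    | succ j =>
      show (1 - pe) * gfun pe t (j + 2) + pe * gfun pe t (j + 1)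
          ≤ (1 - pe) * gfun pe t (j + 1) + pe * gfun pe t j
      gcongr <;> exact ih _

/-- Chernoff-type bound on the failure probability, by elementary induction. -/
lemma hfun_le {p : ℝ} (hp0 : 0 < p) (hp1 : p ≤ 1) :
    ∀ t j, hfun (ENNReal.ofReal p) t j ≤ 2 ^ j * (ENNReal.ofReal (1 - p / 2)) ^ t := by
  have key : (1 - ENNReal.ofReal p) * 2 + ENNReal.ofReal p
      = 2 * ENNReal.ofReal (1 - p / 2) := by
    have h1 : (1 : ℝ≥0∞) - ENNReal.ofReal p = ENNReal.ofReal (1 - p) := by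
      rw [ENNReal.ofReal_sub _ hp0.le, ENNReal.ofReal_one]
    rw [h1]
    rw [show (2 : ℝ≥0∞) = ENNReal.ofReal 2 by simp]
    rw [← ENNReal.ofReal_mul (by linarith), ← ENNReal.ofReal_add (by nlinarith) hp0.le,
      ← ENNReal.ofReal_mul (by norm_num)]
    congr 1
    ring
  intro t
  induction t with
  | zero =>
    intro j
    cases j with
    | zero => simp [hfun]
    | succ j =>
      show (1 : ℝ≥0∞) ≤ 2 ^ (j + 1) * _ ^ 0
      rw [pow_zero, mul_one]
      exact one_le_two.trans (le_self_pow₀ one_le_two (Nat.succ_ne_zero j))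
  | succ t ih =>
    intro j
    cases j with
    | zero => simp [hfun]
    | succ j =>
      show (1 - ENNReal.ofReal p) * hfun _ t (j + 1) + ENNReal.ofReal p * hfun _ t j ≤ _
      calc (1 - ENNReal.ofReal p) * hfun _ t (j + 1) + ENNReal.ofReal p * hfun _ t j
          ≤ (1 - ENNReal.ofReal p) * (2 ^ (j + 1) * (ENNReal.ofReal (1 - p / 2)) ^ t)
            + ENNReal.ofReal p * (2 ^ j * (ENNReal.ofReal (1 - p / 2)) ^ t) := by
            gcongr
            · exact ih (j + 1)
            · exact ih j
        _ = (2 ^ j * (ENNReal.ofReal (1 - p / 2)) ^ t) *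
            ((1 - ENNReal.ofReal p) * 2 + ENNReal.ofReal p) := by ring
        _ = 2 ^ (j + 1) * (ENNReal.ofReal (1 - p / 2)) ^ (t + 1) := by
            rw [key]; ring

section pathbound

variable {Ω : Type} [MeasurableSpace Ω] {d : ℕ} {v0 : Fin d → Bool}
  {coin : ℕ → (Fin d → Bool) → (Fin d → Bool) → Ω → Bool} {P : Measure Ω} {p : ℝ}

/-- Per-vertex bound: the probability that a vertex of the subcube (agreeing with `v0`
from coordinate `k` on) is not yet informed at time `t` is at most `hfun (ofReal p) t k`. -/
lemma path_bound [IsProbabilityMeasure P] (hp0 : 0 < p) (hp1 : p ≤ 1)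
    (hcoin : PropagationCoins coin P p) (k : ℕ) (hk : k ≤ d)
    (v : Fin d → Bool) (hv : ∀ i : Fin d, k ≤ (i : ℕ) → v i = v0 i) (t : ℕ) :
    P {ω | ¬ informed (SimpleGraph.fromRel fun u w : Fin d → Bool =>
        Nat.card {i : Fin d // u i ≠ w i} = 1).Adj coin v0 t v ω}
      ≤ hfun (ENNReal.ofReal p) t k := by
  classical
  set E := (SimpleGraph.fromRel fun u w : Fin d → Bool =>
      Nat.card {i : Fin d // u i ≠ w i} = 1).Adj with hE
  set pe := ENNReal.ofReal p with hpe
  have hpe1 : pe ≤ 1 := ENNReal.ofReal_le_one.mpr hp1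
  -- the path
  set u : ℕ → (Fin d → Bool) := fun j => fun i => if (i : ℕ) < j then v i else v0 i with hu
  have hu0 : u 0 = v0 := by funext i; simp [hu]
  have huk : u k = v := by
    funext i
    simp only [hu]
    by_cases h : (i : ℕ) < k
    · simp [h]
    · simp only [h, if_false]
      exact (hv i (by omega)).symm
  -- the progress events
  set A : ℕ → ℕ → Set Ω := fun t j => {ω | ∀ i ≤ j, informed E coin v0 t (u i) ω} with hA
  have hAmeas : ∀ t j, MeasurableSet (A t j) := by
    intro t j
    have : A t j = ⋂ (i : ℕ), ⋂ (_ : i ≤ j), {ω | informed E coin v0 t (u i) ω} := by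
      ext ω; simp [hA]
    rw [this]
    exact MeasurableSet.iInter fun i => MeasurableSet.iInter fun _ =>
      measurableSet_informed hcoin.1 t (u i)
  have hAanti : ∀ t j, A t (j + 1) ⊆ A t j := by
    intro t j ω hω i hi
    exact hω i (by omega)
  have hAmono : ∀ t j, A t j ⊆ A (t + 1) j := by
    intro t j ω hω i hi
    exact informed_mono (Nat.le_succ t) (hω i hi)
  have hA0 : ∀ t, A t 0 = Set.univ := by
    intro t
    ext ω
    simp only [hA, Set.mem_setOf_eq, Set.mem_univ, iff_true]
    intro i hi
    have : i = 0 := by omega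
    rw [this, hu0]
    exact informed_self t ω
  -- key induction
  have key : ∀ t j, j ≤ k → gfun pe t j ≤ P (A t j) := by
    intro t
    induction t with
    | zero =>
      intro j hj
      cases j with
      | zero => rw [hA0 0]; simp [gfun]
      | succ j => show (0 : ℝ≥0∞) ≤ _; exact zero_le
    | succ t ih =>
      intro j hj
      cases j with
      | zero => rw [hA0 (t+1)]; simp [gfun]
      | succ j =>
        have hj' : j ≤ k := by omega
        have hx := ih (j + 1) hj
        have hy := ih j hj'
        set x := P (A t (j + 1)) with hxdef
        set y := P (A t j) with hydef
        have hxy : x ≤ y := measure_mono (hAanti t j)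
        have hx1 : x ≠ ∞ := measure_ne_top P _
        by_cases hcase : u j = u (j + 1)
        · -- lazy step
          have hAeq : A t (j + 1) = A t j := by
            apply Set.Subset.antisymm (hAanti t j)
            intro ω hω i hi
            rcases Nat.lt_or_ge i (j + 1) with h | h
            · exact hω i (by omega)
            · have : i = j + 1 := by omega
              rw [this, ← hcase]
              exact hω j (le_refl j)
          show (1 - pe) * gfun pe t (j + 1) + pe * gfun pe t j ≤ P (A (t+1) (j+1))
          calc (1 - pe) * gfun pe t (j + 1) + pe * gfun pe t j
              ≤ (1 - pe) * x + pe * y := by gcongr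
            _ = (1 - pe) * x + pe * x := by rw [hxdef, hydef, hAeq]
            _ = ((1 - pe) + pe) * x := by ring
            _ = x := by rw [tsub_add_cancel_of_le hpe1, one_mul]
            _ ≤ P (A (t+1) (j+1)) := measure_mono (hAmono t (j+1))
        · -- real step across an edge
          have hjd : j < d := by omega
          have hEdge : E (u j) (u (j + 1)) := by
            rw [hE, SimpleGraph.fromRel_adj]
            refine ⟨hcase, Or.inl ?_⟩
            rw [Nat.card_eq_one_iff_unique]
            constructor
            · constructor
              rintro ⟨i, hi⟩ ⟨i', hi'⟩
              have hij : (i : ℕ) = j := by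
                by_contra hne
                apply hi
                simp only [hu]
                rcases Nat.lt_or_ge (i : ℕ) j with h | h
                · simp [h, Nat.lt_succ_of_lt h]
                · have : ¬ (i : ℕ) < j := by omega
                  have h2 : ¬ (i : ℕ) < j + 1 := by omega
                  simp [this, h2]
              have hij' : (i' : ℕ) = j := by
                by_contra hne
                apply hi'
                simp only [hu]
                rcases Nat.lt_or_ge (i' : ℕ) j with h | h
                · simp [h, Nat.lt_succ_of_lt h]
                · have : ¬ (i' : ℕ) < j := by omega
                  have h2 : ¬ (i' : ℕ) < j + 1 := by omega
                  simp [this, h2]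
              apply Subtype.ext
              apply Fin.ext
              rw [hij, hij']
            · -- nonempty
              have : ∃ i, u j i ≠ u (j + 1) i := by
                by_contra hc
                push_neg at hc
                exact hcase (funext hc)
              obtain ⟨i, hi⟩ := this
              exact ⟨⟨i, hi⟩⟩
          set D := A t j \ A t (j + 1) with hD
          set C := {ω | coin t (u j) (u (j + 1)) ω = true} with hC
          -- saturation of events at time t
          have hsat : ∀ (B : Set Ω), (∀ j', B = A t j') → True := fun _ _ => trivial
          have hDsat : ∀ ω ω', (∀ s a b, s < t → coin s a b ω = coin s a b ω') →
              ω ∈ D → ω' ∈ D := by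
            intro ω ω' hcc hω
            have hfwd : ∀ j', ω ∈ A t j' → ω' ∈ A t j' := by
              intro j' hmem i hi
              exact informed_congr (fun s a b hs => hcc s a b hs) (hmem i hi)
            have hbwd : ∀ j', ω' ∈ A t j' → ω ∈ A t j' := by
              intro j' hmem i hi
              exact informed_congr (fun s a b hs => (hcc s a b hs).symm) (hmem i hi)
            exact ⟨hfwd j hω.1, fun hmem => hω.2 (hbwd (j + 1) hmem)⟩
          have hDC : P (D ∩ C) = P D * pe :=
            coin_indep hcoin t (u j) (u (j + 1)) D hDsat
          have hPD : P D = y - x := by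
            rw [hD, hxdef, hydef]
            exact measure_diff (hAanti t j) (hAmeas t (j+1)).nullMeasurableSet
              (measure_ne_top P _)
          have hsub : A t (j + 1) ∪ (D ∩ C) ⊆ A (t + 1) (j + 1) := by
            rintro ω (hω | ⟨hωD, hωC⟩)
            · intro i hi
              exact informed_mono (Nat.le_succ t) (hω i hi)
            · intro i hi
              rcases Nat.lt_or_ge i (j + 1) with h | h
              · exact informed_mono (Nat.le_succ t) (hωD.1 i (by omega))
              · have : i = j + 1 := by omega
                rw [this]
                exact Or.inr ⟨u j, hEdge, hωD.1 j (le_refl j), hωC⟩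
          have hdisj : Disjoint (A t (j + 1)) (D ∩ C) := by
            rw [Set.disjoint_left]
            rintro ω hω ⟨hωD, _⟩
            exact hωD.2 hω
          have hCmeas : MeasurableSet C := (hcoin.1 t (u j) (u (j+1))) (measurableSet_singleton true)
          calc (1 - pe) * gfun pe t (j + 1) + pe * gfun pe t j
              ≤ (1 - pe) * x + pe * y := by gcongr
            _ = (1 - pe) * x + pe * (x + (y - x)) := by rw [add_tsub_cancel_of_le hxy]
            _ = ((1 - pe) + pe) * x + pe * (y - x) := by ring
            _ = x + pe * (y - x) := by rw [tsub_add_cancel_of_le hpe1, one_mul]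
            _ = P (A t (j + 1)) + P (D ∩ C) := by rw [hDC, hPD, mul_comm]
            _ = P (A t (j + 1) ∪ (D ∩ C)) := by
                rw [measure_union hdisj (((hAmeas t j).diff (hAmeas t (j+1))).inter hCmeas)]
            _ ≤ P (A (t + 1) (j + 1)) := measure_mono hsub
  -- conclude
  have hsubset : {ω | ¬ informed E coin v0 t v ω} ⊆ (A t k)ᶜ := by
    intro ω hω hmem
    exact hω (huk ▸ hmem k (le_refl k))
  calc P {ω | ¬ informed E coin v0 t v ω} ≤ P ((A t k)ᶜ) := measure_mono hsubset
    _ = 1 - P (A t k) := prob_compl_eq_one_sub (hAmeas t k)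
    _ ≤ hfun pe t k := by
        rw [tsub_le_iff_right]
        calc (1 : ℝ≥0∞) = gfun pe t k + hfun pe t k := (gfun_add_hfun hpe1 t k).symm
          _ = hfun pe t k + gfun pe t k := add_comm _ _
          _ ≤ hfun pe t k + P (A t k) := by gcongr; exact key t k (le_refl k)

end pathbound

set_option maxHeartbeats 1000000 in
/-- **Propagation on the hypercube.** On the `d`-dimensional hypercube graph (vertices are bit
strings of length `d`, adjacent iff they differ in exactly one bit), for every `0 ≤ k ≤ d` the
expected number of rounds until at least `2^k` vertices are informed is at most
`24 (k + 1) / p`. -/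
theorem propagation_hypercube {Ω : Type} [MeasurableSpace Ω]
    (P : Measure Ω) [IsProbabilityMeasure P] (p : ℝ) (hp0 : 0 < p) (hp1 : p ≤ 1)
    (d : ℕ) (v0 : Fin d → Bool)
    (coin : ℕ → (Fin d → Bool) → (Fin d → Bool) → Ω → Bool)
    (hcoin : PropagationCoins coin P p) (k : ℕ) (hk : k ≤ d) :
    ∫⁻ ω, (⨅ (t : ℕ) (_ : 2 ^ k ≤ Nat.card {v : Fin d → Bool //
        informed (SimpleGraph.fromRel fun u v : Fin d → Bool =>
          Nat.card {i : Fin d // u i ≠ v i} = 1).Adj coin v0 t v ω}),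
      (t : ℝ≥0∞)) ∂P ≤ ENNReal.ofReal (24 * ((k : ℝ) + 1) / p) := by
  classical
  set E := (SimpleGraph.fromRel fun u v : Fin d → Bool =>
      Nat.card {i : Fin d // u i ≠ v i} = 1).Adj with hE
  set pe := ENNReal.ofReal p with hpe
  set q := ENNReal.ofReal (1 - p / 2) with hq
  have hp2 : (0:ℝ) ≤ 1 - p / 2 := by linarith
  -- the subcube embedding
  set emb : (Fin k → Bool) → (Fin d → Bool) :=
    fun b i => if h : (i : ℕ) < k then b ⟨i, h⟩ else v0 i with hemb
  have hembv : ∀ b (i : Fin d), k ≤ (i : ℕ) → emb b i = v0 i := by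
    intro b i hi
    simp only [hemb]
    rw [dif_neg (by omega)]
  have hembinj : Function.Injective emb := by
    intro b b' hbb
    funext i
    have := congrFun hbb ⟨(i : ℕ), lt_of_lt_of_le i.2 hk⟩
    simpa only [hemb, dif_pos (show ((⟨(i : ℕ), lt_of_lt_of_le i.2 hk⟩ : Fin d) : ℕ) < k from i.2)]
      using this
  set Bad : ℕ → Set Ω := fun t => ⋃ b : Fin k → Bool,
    {ω | ¬ informed E coin v0 t (emb b) ω} with hBad
  have hBadMeas : ∀ t, MeasurableSet (Bad t) :=
    fun t => MeasurableSet.iUnion fun b => (measurableSet_informed hcoin.1 t (emb b)).compl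
  -- Step A: pointwise bound by sum of indicators
  have stepA : ∀ ω, (⨅ (t : ℕ) (_ : 2 ^ k ≤ Nat.card {v : Fin d → Bool //
      informed E coin v0 t v ω}), (t : ℝ≥0∞))
      ≤ ∑' t, (Bad t).indicator (fun _ => (1 : ℝ≥0∞)) ω := by
    intro ω
    by_cases hex : ∃ t, ω ∉ Bad t
    · set T := Nat.find hex with hT
      have hTgood : ω ∉ Bad T := Nat.find_spec hex
      have hmin : ∀ s, s < T → ω ∈ Bad s := by
        intro s hs
        have := Nat.find_min hex hs
        simpa using this
      have hall : ∀ b : Fin k → Bool, informed E coin v0 T (emb b) ω := by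
        intro b
        by_contra hb
        exact hTgood (Set.mem_iUnion.mpr ⟨b, hb⟩)
      have hcard : 2 ^ k ≤ Nat.card {v : Fin d → Bool // informed E coin v0 T v ω} := by
        have hinj : Function.Injective
            (fun b : Fin k → Bool =>
              (⟨emb b, hall b⟩ : {v : Fin d → Bool // informed E coin v0 T v ω})) := by
          intro b b' hbb
          exact hembinj (congrArg Subtype.val hbb)
        calc (2 ^ k : ℕ) = Nat.card (Fin k → Bool) := by
              simp [Nat.card_fun, Nat.card_eq_fintype_card]
          _ ≤ _ := Nat.card_le_card_of_injective _ hinj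
      refine le_trans (le_trans (iInf_le _ T) (iInf_le _ hcard)) ?_
      have : (T : ℝ≥0∞) = ∑ s ∈ Finset.range T, (Bad s).indicator (fun _ => (1:ℝ≥0∞)) ω := by
        rw [Finset.sum_congr rfl (fun s hs => Set.indicator_of_mem
          (hmin s (Finset.mem_range.mp hs)) _)]
        simp
      rw [this]
      exact ENNReal.sum_le_tsum _
    · push_neg at hex
      refine le_top.trans (le_of_eq ?_)
      rw [tsum_congr (fun t => (Set.indicator_of_mem (hex t) _))]
      exact (ENNReal.tsum_const_eq_top_of_ne_zero one_ne_zero).symm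
  -- Step B: integrate
  have stepB : ∫⁻ ω, (⨅ (t : ℕ) (_ : 2 ^ k ≤ Nat.card {v : Fin d → Bool //
      informed E coin v0 t v ω}), (t : ℝ≥0∞)) ∂P ≤ ∑' t, P (Bad t) := by
    calc ∫⁻ ω, (⨅ (t : ℕ) (_ : 2 ^ k ≤ Nat.card {v : Fin d → Bool //
          informed E coin v0 t v ω}), (t : ℝ≥0∞)) ∂P
        ≤ ∫⁻ ω, ∑' t, (Bad t).indicator (fun _ => (1 : ℝ≥0∞)) ω ∂P := lintegral_mono stepA
      _ = ∑' t, ∫⁻ ω, (Bad t).indicator (fun _ => (1 : ℝ≥0∞)) ω ∂P :=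
          lintegral_tsum fun t => ((measurable_const.indicator (hBadMeas t)).aemeasurable)
      _ = ∑' t, P (Bad t) := by
          refine tsum_congr fun t => ?_
          exact lintegral_indicator_one (hBadMeas t)
  -- Step C: per-round bound
  have stepC : ∀ t, P (Bad t) ≤ 2 ^ k * (2 ^ k * q ^ t) := by
    intro t
    calc P (Bad t) ≤ ∑' b : Fin k → Bool, P {ω | ¬ informed E coin v0 t (emb b) ω} :=
          measure_iUnion_le _
      _ ≤ ∑' _ : Fin k → Bool, (2 ^ k * q ^ t : ℝ≥0∞) := by
          refine ENNReal.tsum_le_tsum fun b => ?_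
          calc P {ω | ¬ informed E coin v0 t (emb b) ω}
              ≤ hfun pe t k := path_bound hp0 hp1 hcoin k hk (emb b) (hembv b) t
            _ ≤ 2 ^ k * q ^ t := hfun_le hp0 hp1 t k
      _ = 2 ^ k * (2 ^ k * q ^ t) := by
          rw [tsum_fintype, Finset.sum_const, Finset.card_univ]
          rw [nsmul_eq_mul]
          congr 1
          simp
  -- Step D: sum up
  set t0 : ℕ := ⌈4 * ((k : ℝ) + 1) / p⌉₊ with ht0
  have ht0le : 4 * ((k : ℝ) + 1) / p ≤ (t0 : ℝ) := Nat.le_ceil _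
  have ht0pos : (0:ℝ) ≤ 4 * ((k : ℝ) + 1) / p := by positivity
  have hqpow : ∀ n : ℕ, q ^ n = ENNReal.ofReal ((1 - p / 2) ^ n) := by
    intro n
    rw [hq, ← ENNReal.ofReal_pow hp2]
  -- `2^k * 2^k * q^t0 ≤ 1`
  have hsmall : (2 ^ k : ℝ≥0∞) * (2 ^ k * q ^ t0) ≤ 1 := by
    have h2k : (2 ^ k : ℝ≥0∞) = ENNReal.ofReal (2 ^ k) := by
      rw [ENNReal.ofReal_pow (by norm_num : (0:ℝ) ≤ 2), ENNReal.ofReal_ofNat]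
    rw [h2k, hqpow, ← ENNReal.ofReal_mul (by positivity), ← ENNReal.ofReal_mul (by positivity)]
    rw [show (1 : ℝ≥0∞) = ENNReal.ofReal 1 by simp]
    apply ENNReal.ofReal_le_ofReal
    rw [← mul_assoc]
    -- real inequality : 4^k (1-p/2)^t0 ≤ 1
    have e1 : (1 - p / 2 : ℝ) ≤ Real.exp (-(p / 2)) := by
      have := Real.add_one_le_exp (-(p / 2))
      linarith
    have e2 : ((1 : ℝ) - p / 2) ^ t0 ≤ Real.exp (-(p / 2)) ^ t0 :=
      pow_le_pow_left₀ hp2 e1 t0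
    have e3 : Real.exp (-(p / 2)) ^ t0 = Real.exp (-(p / 2) * t0) := by
      rw [mul_comm, Real.exp_nat_mul]
    have e4 : (2 : ℝ) ^ k * 2 ^ k = 4 ^ k := by
      rw [← mul_pow]; norm_num
    have e5 : (4 : ℝ) ^ k ≤ Real.exp (2 * k) := by
      have h4 : (4 : ℝ) ≤ Real.exp 2 := by
        have h2 : (2 : ℝ) ≤ Real.exp 1 := by
          have := Real.add_one_le_exp 1
          linarith
        calc (4 : ℝ) = 2 * 2 := by norm_num
          _ ≤ Real.exp 1 * Real.exp 1 := by nlinarith [Real.exp_pos 1]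
          _ = Real.exp 2 := by rw [← Real.exp_add]; norm_num
      calc (4 : ℝ) ^ k ≤ Real.exp 2 ^ k := pow_le_pow_left₀ (by norm_num) h4 k
        _ = Real.exp (2 * k) := by rw [mul_comm, Real.exp_nat_mul]
    have e6 : -(p / 2) * t0 ≤ -(2 * ((k : ℝ) + 1)) := by
      have : 4 * ((k : ℝ) + 1) ≤ p * t0 := by
        rw [div_le_iff₀ hp0] at ht0le
        linarith
      nlinarith
    calc (2 : ℝ) ^ k * 2 ^ k * (1 - p / 2) ^ t0
        ≤ 4 ^ k * Real.exp (-(p / 2) * t0) := by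
          rw [e4]
          have h4pos : (0:ℝ) ≤ (4:ℝ)^k := by positivity
          calc (4:ℝ) ^ k * (1 - p/2) ^ t0 ≤ 4 ^ k * Real.exp (-(p/2)) ^ t0 := by
                exact mul_le_mul_of_nonneg_left e2 h4pos
            _ = 4 ^ k * Real.exp (-(p / 2) * t0) := by rw [e3]
      _ ≤ Real.exp (2 * k) * Real.exp (-(p / 2) * t0) := by
          exact mul_le_mul_of_nonneg_right e5 (Real.exp_pos _).le
      _ = Real.exp (2 * k + -(p / 2) * t0) := by rw [← Real.exp_add]
      _ ≤ 1 := by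
          rw [Real.exp_le_one_iff]
          nlinarith [e6]
  -- geometric sum
  have hgeom : ∑' t : ℕ, P (Bad (t + t0)) ≤ ENNReal.ofReal (2 / p) := by
    have h1q : (1 : ℝ≥0∞) - q = ENNReal.ofReal (p / 2) := by
      rw [hq, show (1:ℝ≥0∞) = ENNReal.ofReal 1 by simp, ← ENNReal.ofReal_sub _ hp2]
      norm_num
    calc ∑' t : ℕ, P (Bad (t + t0))
        ≤ ∑' t : ℕ, (2 ^ k * (2 ^ k * q ^ t0)) * q ^ t := by
          refine ENNReal.tsum_le_tsum fun t => ?_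
          calc P (Bad (t + t0)) ≤ 2 ^ k * (2 ^ k * q ^ (t + t0)) := stepC (t + t0)
            _ = (2 ^ k * (2 ^ k * q ^ t0)) * q ^ t := by rw [pow_add]; ring
      _ = (2 ^ k * (2 ^ k * q ^ t0)) * ∑' t : ℕ, q ^ t := ENNReal.tsum_mul_left
      _ ≤ 1 * (1 - q)⁻¹ := by
          rw [ENNReal.tsum_geometric]
          exact mul_le_mul_left hsmall _
      _ = (ENNReal.ofReal (p / 2))⁻¹ := by rw [one_mul, h1q]
      _ = ENNReal.ofReal (2 / p) := by
          rw [← ENNReal.ofReal_inv_of_pos (by positivity)]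
          congr 1
          rw [inv_div]
  -- final assembly
  calc ∫⁻ ω, (⨅ (t : ℕ) (_ : 2 ^ k ≤ Nat.card {v : Fin d → Bool //
        informed E coin v0 t v ω}), (t : ℝ≥0∞)) ∂P
      ≤ ∑' t, P (Bad t) := stepB
    _ = (∑ t ∈ Finset.range t0, P (Bad t)) + ∑' t, P (Bad (t + t0)) :=
        (Summable.sum_add_tsum_nat_add' (f := fun t => P (Bad t)) (k := t0) ENNReal.summable).symm
    _ ≤ (∑ _t ∈ Finset.range t0, 1) + ENNReal.ofReal (2 / p) :=
        add_le_add (Finset.sum_le_sum fun t _ => prob_le_one) hgeom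
    _ = (t0 : ℝ≥0∞) + ENNReal.ofReal (2 / p) := by
        rw [Finset.sum_const, Finset.card_range]
        simp
    _ ≤ ENNReal.ofReal (24 * ((k : ℝ) + 1) / p) := by
        rw [show ((t0 : ℝ≥0∞)) = ENNReal.ofReal (t0 : ℝ) by
          rw [ENNReal.ofReal_natCast]]
        rw [← ENNReal.ofReal_add (by positivity) (by positivity)]
        apply ENNReal.ofReal_le_ofReal
        have hceil : (t0 : ℝ) < 4 * ((k : ℝ) + 1) / p + 1 := Nat.ceil_lt_add_one ht0pos
        have h1 : (t0 : ℝ) * p < 4 * ((k : ℝ) + 1) + p := by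
          have h := mul_lt_mul_of_pos_right hceil hp0
          rw [add_mul, div_mul_cancel₀ _ (ne_of_gt hp0), one_mul] at h
          exact h
        rw [le_div_iff₀ hp0, add_mul, div_mul_cancel₀ _ (ne_of_gt hp0)]
        have hk0 : (0:ℝ) ≤ (k : ℝ) := Nat.cast_nonneg k
        nlinarith [h1, hp1, hk0]
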